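/- The real number θ = (-27+8√14)^{1/4} (the positive real fourth root of the positive real number -27+8√14) has minimal polynomial x⁸ + 54x⁴ - 167 over ℚ; consequently the field L = ℚ(θ) has degree 8 over ℚ, contains the real quadratic field ℚ(√14), and satisfies [L : ℚ(√14)] = 4. -/

import Mathlib

open IntermediateField Polynomial

private lemma sqrt14_irrational : Irrational (Real.sqrt 14) := by
  have : ¬ IsSquare (14 : ℕ) := by
    rintro ⟨r, hr⟩
    have h4 : r ≤ 4 := by nlinarith
    interval_cases r <;> omega
  exact irrational_sqrt_natCast_iff.mpr this

private lemma sq_sqrt14 : Real.sqrt 14 ^ 2 = 14 := Real.sq_sqrt (by norm_num)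

/-- Splitting a rational linear relation in `√14`. -/
private lemma split14 (u v : ℚ) (h : (u : ℝ) + v * Real.sqrt 14 = 0) : u = 0 ∧ v = 0 := by
  by_cases hv : v = 0
  · subst hv
    constructor
    · exact_mod_cast by simpa using h
    · rfl
  · exfalso
    apply sqrt14_irrational
    refine ⟨-u / v, ?_⟩
    have hv' : (v : ℝ) ≠ 0 := by exact_mod_cast hv
    push_cast
    field_simp
    linarith [h]

/-- `-27 + 8√14` is not the square of an element `a + b√14` with `a b : ℚ`. -/
private lemma key2 (a b : ℚ) : ((a : ℝ) + b * Real.sqrt 14) ^ 2 ≠ -27 + 8 * Real.sqrt 14 := by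
  intro h
  set s := Real.sqrt 14 with hs
  have hs2 : s ^ 2 = 14 := sq_sqrt14
  have hsplit := split14 (a ^ 2 + 14 * b ^ 2 + 27) (2 * a * b - 8) (by
    push_cast
    linear_combination h - b ^ 2 * hs2)
  have h1 : a ^ 2 + 14 * b ^ 2 + 27 = 0 := hsplit.1
  nlinarith [sq_nonneg a, sq_nonneg b]

/-- Rationalizing a quotient of elements of `ℚ + ℚ√14`. -/
private lemma ratz (u v w z : ℚ) (h : (w : ℝ) + z * Real.sqrt 14 ≠ 0) :
    ∃ a b : ℚ, ((u : ℝ) + v * Real.sqrt 14) / ((w : ℝ) + z * Real.sqrt 14)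
      = (a : ℝ) + b * Real.sqrt 14 := by
  set s := Real.sqrt 14 with hs
  have hs2 : s ^ 2 = 14 := sq_sqrt14
  have hD : (w : ℚ) ^ 2 - 14 * z ^ 2 ≠ 0 := by
    intro hD0
    rcases eq_or_ne z 0 with hz0 | hz0
    · have hw0 : w = 0 := by nlinarith
      apply h
      rw [hz0, hw0]
      push_cast
      ring
    · have hz' : (z : ℝ) ≠ 0 := by exact_mod_cast hz0
      have h14 : ((w : ℝ) / z) ^ 2 = s ^ 2 := by
        rw [hs2, div_pow, div_eq_iff (pow_ne_zero 2 hz')]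
        exact_mod_cast (by linarith : (w : ℚ) ^ 2 = 14 * z ^ 2)
      rcases (pow_eq_pow_iff_of_ne_zero (by norm_num : (2:ℕ) ≠ 0)).mp h14 with h' | ⟨h', -⟩
      · rw [hs] at h'
        exact sqrt14_irrational ⟨w / z, by push_cast; exact h'⟩
      · rw [hs] at h'
        exact sqrt14_irrational ⟨-(w / z), by push_cast; linarith⟩
  obtain ⟨a, ha⟩ : ∃ a : ℚ, a * (w ^ 2 - 14 * z ^ 2) = u * w - 14 * v * z :=
    ⟨_, div_mul_cancel₀ _ hD⟩
  obtain ⟨b, hb⟩ : ∃ b : ℚ, b * (w ^ 2 - 14 * z ^ 2) = v * w - u * z :=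
    ⟨_, div_mul_cancel₀ _ hD⟩
  refine ⟨a, b, ?_⟩
  have ha' : (a : ℝ) * ((w : ℝ) ^ 2 - 14 * (z : ℝ) ^ 2) = (u : ℝ) * w - 14 * v * z := by
    exact_mod_cast ha
  have hb' : (b : ℝ) * ((w : ℝ) ^ 2 - 14 * (z : ℝ) ^ 2) = (v : ℝ) * w - (u : ℝ) * z := by
    exact_mod_cast hb
  have hD' : ((w : ℝ) ^ 2 - 14 * (z : ℝ) ^ 2) ≠ 0 := by exact_mod_cast hD
  rw [div_eq_iff h]
  apply mul_left_cancel₀ hD'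
  linear_combination (-((w : ℝ) + z * s)) * ha' + (-(((w : ℝ) + z * s) * s)) * hb'
    - (z : ℝ) * ((v : ℝ) * w - (u : ℝ) * z) * hs2

/-- representation of elements of `ℚ⟮α⟯` as low-degree polynomials in `α`. -/
private lemma mem_adjoin_repr (α x : ℝ) (g : ℚ[X]) (hg : g.Monic) (hdeg : 0 < g.natDegree)
    (hroot : Polynomial.aeval α g = 0) (hx : x ∈ IntermediateField.adjoin ℚ {α}) :
    ∃ r : ℚ[X], r.natDegree < g.natDegree ∧ x = Polynomial.aeval α r := by
  have hint : IsIntegral ℚ α := ⟨g, hg, by rwa [Polynomial.aeval_def] at hroot⟩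
  have h1 := IntermediateField.adjoin_simple_toSubalgebra_of_isAlgebraic hint.isAlgebraic
  have hx' : x ∈ Algebra.adjoin ℚ {α} := by
    rw [← h1]
    exact hx
  rw [Algebra.adjoin_singleton_eq_range_aeval] at hx'
  obtain ⟨r0, hr0⟩ := hx'
  refine ⟨r0 %ₘ g, ?_, ?_⟩
  · rcases eq_or_ne (r0 %ₘ g) 0 with h0 | h0
    · simpa [h0] using hdeg
    · exact Polynomial.natDegree_lt_natDegree h0 (Polynomial.degree_modByMonic_lt r0 hg)
  · have hdiv := Polynomial.modByMonic_add_div r0 g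
    calc x = Polynomial.aeval α r0 := hr0.symm
      _ = Polynomial.aeval α (r0 %ₘ g + g * (r0 /ₘ g)) := by rw [hdiv]
      _ = Polynomial.aeval α (r0 %ₘ g) := by simp [hroot]

set_option maxHeartbeats 1000000 in
/-- The real number `θ = (-27+8√14)^{1/4}` (the positive real fourth root of the
positive real number `-27+8√14`) has minimal polynomial `x⁸ + 54x⁴ - 167` over `ℚ`;
consequently `L = ℚ(θ)` has degree `8` over `ℚ`, contains the real quadratic field
`ℚ(√14)`, and satisfies `[L : ℚ(√14)] = 4`. -/
theorem minpoly_fourth_root_neg27_add_8_sqrt14 (θ : ℝ)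
    (hθ : θ = (-27 + 8 * Real.sqrt 14) ^ ((1 : ℝ) / 4)) :
    minpoly ℚ θ = X ^ 8 + 54 * X ^ 4 - 167 ∧
    Module.finrank ℚ ℚ⟮θ⟯ = 8 ∧
    ∃ h : ℚ⟮Real.sqrt 14⟯ ≤ ℚ⟮θ⟯,
      Module.finrank ℚ⟮Real.sqrt 14⟯ (IntermediateField.extendScalars h) = 4 := by
  set s := Real.sqrt 14 with hsdef
  have hs2 : s ^ 2 = 14 := sq_sqrt14
  have hs0 : 0 ≤ s := Real.sqrt_nonneg 14
  have hc0 : (0 : ℝ) < -27 + 8 * s := by nlinarith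
  have hθ4 : θ ^ 4 = -27 + 8 * s := by
    rw [hθ]
    rw [← Real.rpow_natCast ((-27 + 8 * s) ^ ((1 : ℝ) / 4)) 4, ← Real.rpow_mul hc0.le]
    norm_num
  set φ := θ ^ 2 with hφdef
  have hφ2 : φ ^ 2 = -27 + 8 * s := by
    rw [hφdef, ← pow_mul]
    exact hθ4
  have hθ2φ : θ ^ 2 = φ := rfl
  -- the three polynomials
  have hm8 : ((X : ℚ[X]) ^ 8 + 54 * X ^ 4 - 167).Monic := by monicity!
  have hm4 : ((X : ℚ[X]) ^ 4 + 54 * X ^ 2 - 167).Monic := by monicity!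
  have hm2 : ((X : ℚ[X]) ^ 2 - 14).Monic := by monicity!
  have hd8 : ((X : ℚ[X]) ^ 8 + 54 * X ^ 4 - 167).natDegree = 8 := by compute_degree!
  have hd4 : ((X : ℚ[X]) ^ 4 + 54 * X ^ 2 - 167).natDegree = 4 := by compute_degree!
  have hd2 : ((X : ℚ[X]) ^ 2 - 14).natDegree = 2 := by compute_degree!
  have hroot8 : Polynomial.aeval θ ((X : ℚ[X]) ^ 8 + 54 * X ^ 4 - 167) = 0 := by
    simp only [map_add, map_sub, map_mul, map_pow, aeval_X, map_ofNat]
    linear_combination (θ ^ 4 + (-27 + 8 * s) + 54) * hθ4 + 64 * hs2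
  have hroot4 : Polynomial.aeval φ ((X : ℚ[X]) ^ 4 + 54 * X ^ 2 - 167) = 0 := by
    simp only [map_add, map_sub, map_mul, map_pow, aeval_X, map_ofNat]
    linear_combination (φ ^ 2 + (-27 + 8 * s) + 54) * hφ2 + 64 * hs2
  have hroot2 : Polynomial.aeval s ((X : ℚ[X]) ^ 2 - 14) = 0 := by
    simp only [map_sub, map_pow, aeval_X, map_ofNat]
    linear_combination hs2
  have hint_θ : IsIntegral ℚ θ := ⟨_, hm8, by rwa [Polynomial.aeval_def] at hroot8⟩
  have hint_φ : IsIntegral ℚ φ := ⟨_, hm4, by rwa [Polynomial.aeval_def] at hroot4⟩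
  have hint_s : IsIntegral ℚ s := ⟨_, hm2, by rwa [Polynomial.aeval_def] at hroot2⟩
  haveI := IntermediateField.adjoin.finiteDimensional hint_θ
  haveI := IntermediateField.adjoin.finiteDimensional hint_φ
  haveI := IntermediateField.adjoin.finiteDimensional hint_s
  -- inclusions
  have h27 : (27 : ℝ) ∈ ℚ⟮θ⟯ := by
    simpa using IntermediateField.algebraMap_mem ℚ⟮θ⟯ (27 : ℚ)
  have h27' : (27 : ℝ) ∈ ℚ⟮φ⟯ := by
    simpa using IntermediateField.algebraMap_mem ℚ⟮φ⟯ (27 : ℚ)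
  have h8 : (8 : ℝ) ∈ ℚ⟮θ⟯ := by
    simpa using IntermediateField.algebraMap_mem ℚ⟮θ⟯ (8 : ℚ)
  have h8' : (8 : ℝ) ∈ ℚ⟮φ⟯ := by
    simpa using IntermediateField.algebraMap_mem ℚ⟮φ⟯ (8 : ℚ)
  have hsθval : s = (θ ^ 4 + 27) / 8 := by linarith [hθ4]
  have hsφval : s = (φ ^ 2 + 27) / 8 := by linarith [hφ2]
  have hsK : s ∈ ℚ⟮θ⟯ := by
    rw [hsθval]
    exact div_mem (add_mem (pow_mem (IntermediateField.mem_adjoin_simple_self ℚ θ) 4) h27) h8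
  have hsK2 : s ∈ ℚ⟮φ⟯ := by
    rw [hsφval]
    exact div_mem (add_mem (pow_mem (IntermediateField.mem_adjoin_simple_self ℚ φ) 2) h27') h8'
  have hφK : φ ∈ ℚ⟮θ⟯ := pow_mem (IntermediateField.mem_adjoin_simple_self ℚ θ) 2
  have hFK : ℚ⟮s⟯ ≤ ℚ⟮θ⟯ := (IntermediateField.adjoin_simple_le_iff).mpr hsK
  have hFK2 : ℚ⟮s⟯ ≤ ℚ⟮φ⟯ := (IntermediateField.adjoin_simple_le_iff).mpr hsK2
  have hK2K : ℚ⟮φ⟯ ≤ ℚ⟮θ⟯ := (IntermediateField.adjoin_simple_le_iff).mpr hφK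
  -- degree of F = ℚ(√14) is 2
  have hfinF : Module.finrank ℚ ℚ⟮s⟯ = (minpoly ℚ s).natDegree :=
    IntermediateField.adjoin.finrank hint_s
  have hdegs_le : (minpoly ℚ s).natDegree ≤ 2 := by
    rw [← hd2]
    exact Polynomial.natDegree_le_of_dvd (minpoly.dvd ℚ s hroot2) hm2.ne_zero
  have hFpos : 0 < Module.finrank ℚ ℚ⟮s⟯ := Module.finrank_pos
  have hFne1 : Module.finrank ℚ ℚ⟮s⟯ ≠ 1 := by
    intro h1
    have hbot : ℚ⟮s⟯ = ⊥ := IntermediateField.finrank_eq_one_iff.mp h1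
    have hmem : s ∈ (⊥ : IntermediateField ℚ ℝ) :=
      hbot ▸ IntermediateField.mem_adjoin_simple_self ℚ s
    rw [IntermediateField.mem_bot] at hmem
    obtain ⟨q, hq⟩ := hmem
    exact sqrt14_irrational ⟨q, by simpa using hq⟩
  have hdsF : Module.finrank ℚ ℚ⟮s⟯ = 2 := by rw [hfinF] at *; omega
  -- degree of K2 = ℚ(φ)
  have hfinK2 : Module.finrank ℚ ℚ⟮φ⟯ = (minpoly ℚ φ).natDegree :=
    IntermediateField.adjoin.finrank hint_φ
  have hdegφ_le : (minpoly ℚ φ).natDegree ≤ 4 := by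
    rw [← hd4]
    exact Polynomial.natDegree_le_of_dvd (minpoly.dvd ℚ φ hroot4) hm4.ne_zero
  have t1 := IntermediateField.finrank_bot_mul_relfinrank hFK2
  have hK2ne2 : Module.finrank ℚ ℚ⟮φ⟯ ≠ 2 := by
    intro h2
    have heq : ℚ⟮s⟯ = ℚ⟮φ⟯ :=
      IntermediateField.eq_of_le_of_finrank_eq hFK2 (by rw [hdsF, h2])
    have hφF : φ ∈ ℚ⟮s⟯ := heq ▸ IntermediateField.mem_adjoin_simple_self ℚ φ
    obtain ⟨r, hrlt, hrval⟩ := mem_adjoin_repr s φ _ hm2 (by rw [hd2]; norm_num) hroot2 hφF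
    rw [hd2] at hrlt
    have hφab : φ = ((r.coeff 0 : ℝ)) + (r.coeff 1 : ℝ) * s := by
      rw [hrval, Polynomial.aeval_eq_sum_range' hrlt]
      simp [Finset.sum_range_succ, Rat.smul_def]
    exact key2 (r.coeff 0) (r.coeff 1) (by rw [← hφab]; exact hφ2)
  have hdφ : Module.finrank ℚ ℚ⟮φ⟯ = 4 := by
    rw [hdsF] at t1
    have hK2le : Module.finrank ℚ ℚ⟮φ⟯ ≤ 4 := by rw [hfinK2]; exact hdegφ_le
    have hK2pos : 0 < Module.finrank ℚ ℚ⟮φ⟯ := Module.finrank_pos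
    omega
  -- degree of K = ℚ(θ)
  have hfinK : Module.finrank ℚ ℚ⟮θ⟯ = (minpoly ℚ θ).natDegree :=
    IntermediateField.adjoin.finrank hint_θ
  have hdegθ_le : (minpoly ℚ θ).natDegree ≤ 8 := by
    rw [← hd8]
    exact Polynomial.natDegree_le_of_dvd (minpoly.dvd ℚ θ hroot8) hm8.ne_zero
  have t2 := IntermediateField.finrank_bot_mul_relfinrank hK2K
  have hKne4 : Module.finrank ℚ ℚ⟮θ⟯ ≠ 4 := by
    intro h4
    have heq : ℚ⟮φ⟯ = ℚ⟮θ⟯ :=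
      IntermediateField.eq_of_le_of_finrank_eq hK2K (by rw [hdφ, h4])
    have hθF : θ ∈ ℚ⟮φ⟯ := heq ▸ IntermediateField.mem_adjoin_simple_self ℚ θ
    obtain ⟨r, hrlt, hrval⟩ := mem_adjoin_repr φ θ _ hm4 (by rw [hd4]; norm_num) hroot4 hθF
    rw [hd4] at hrlt
    have hθr : θ = ((r.coeff 0 : ℝ)) + (r.coeff 1 : ℝ) * φ + (r.coeff 2 : ℝ) * φ ^ 2
        + (r.coeff 3 : ℝ) * φ ^ 3 := by
      rw [hrval, Polynomial.aeval_eq_sum_range' hrlt]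
      simp [Finset.sum_range_succ, Rat.smul_def]
    set A : ℝ := (r.coeff 0 : ℝ) + (r.coeff 2 : ℝ) * (-27 + 8 * s) with hAdef
    set B : ℝ := (r.coeff 1 : ℝ) + (r.coeff 3 : ℝ) * (-27 + 8 * s) with hBdef
    have hAB : θ = A + B * φ := by
      rw [hθr, hAdef, hBdef]
      linear_combination ((r.coeff 2 : ℝ) + (r.coeff 3 : ℝ) * φ) * hφ2
    have hsq : (1 - 2 * A * B) * φ = A ^ 2 + B ^ 2 * (-27 + 8 * s) := by
      linear_combination (-1 : ℝ) * hθ2φ + (θ + A + B * φ) * hAB + B ^ 2 * hφ2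
    by_cases hzz : (1 : ℝ) - 2 * A * B = 0
    · have hzero : A ^ 2 + B ^ 2 * (-27 + 8 * s) = 0 := by rw [← hsq, hzz, zero_mul]
      have hBne : B ≠ 0 := by
        intro hB0
        rw [hB0] at hzz
        norm_num at hzz
      have hB2 : 0 < B ^ 2 := lt_of_le_of_ne (sq_nonneg B) (Ne.symm (pow_ne_zero 2 hBne))
      nlinarith [mul_pos hB2 hc0, sq_nonneg A, hzero]
    · set u : ℚ := r.coeff 0 - 27 * r.coeff 2 with hu
      set v : ℚ := 8 * r.coeff 2 with hv
      set w : ℚ := r.coeff 1 - 27 * r.coeff 3 with hw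
      set z : ℚ := 8 * r.coeff 3 with hz
      have hA : A = (u : ℝ) + v * s := by rw [hAdef, hu, hv]; push_cast; ring
      have hB : B = (w : ℝ) + z * s := by rw [hBdef, hw, hz]; push_cast; ring
      have hnum : A ^ 2 + B ^ 2 * (-27 + 8 * s)
          = ((u ^ 2 + 14 * v ^ 2 - 27 * (w ^ 2 + 14 * z ^ 2) + 224 * w * z : ℚ) : ℝ)
            + ((2 * u * v + 8 * (w ^ 2 + 14 * z ^ 2) - 54 * w * z : ℚ) : ℝ) * s := by
        rw [hA, hB]
        push_cast
        linear_combination ((v : ℝ) ^ 2 - 27 * (z : ℝ) ^ 2 + 16 * (w : ℝ) * z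
          + 8 * (z : ℝ) ^ 2 * s) * hs2
      have hden : 1 - 2 * A * B
          = ((1 - 2 * (u * w + 14 * v * z) : ℚ) : ℝ)
            + ((-2 * (u * z + v * w) : ℚ) : ℝ) * s := by
        rw [hA, hB]
        push_cast
        linear_combination (-2 * (v : ℝ) * z) * hs2
      have hden_ne : ((1 - 2 * (u * w + 14 * v * z) : ℚ) : ℝ)
          + ((-2 * (u * z + v * w) : ℚ) : ℝ) * s ≠ 0 := by
        rw [← hden]
        exact hzz
      obtain ⟨a, b, hab⟩ := ratz _ _ _ _ hden_ne
      have hφab : φ = (a : ℝ) + b * s := by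
        rw [← hab, ← hnum, ← hden, eq_div_iff hzz]
        linear_combination hsq
      exact key2 a b (by rw [← hφab]; exact hφ2)
  have hdθ : Module.finrank ℚ ℚ⟮θ⟯ = 8 := by
    rw [hdφ] at t2
    have hKpos : 0 < Module.finrank ℚ ℚ⟮θ⟯ := Module.finrank_pos
    have hKle : Module.finrank ℚ ℚ⟮θ⟯ ≤ 8 := by rw [hfinK]; exact hdegθ_le
    omega
  -- conclude
  have hminpoly : minpoly ℚ θ = X ^ 8 + 54 * X ^ 4 - 167 := by
    have hdvd : minpoly ℚ θ ∣ (X : ℚ[X]) ^ 8 + 54 * X ^ 4 - 167 := minpoly.dvd ℚ θ hroot8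
    obtain ⟨q, hq⟩ := hdvd
    have hmne : minpoly ℚ θ ≠ 0 := (minpoly.monic hint_θ).ne_zero
    have hqne : q ≠ 0 := by
      intro h0
      rw [h0, mul_zero] at hq
      exact hm8.ne_zero hq
    have hdeg : (minpoly ℚ θ).natDegree = 8 := by rw [← hfinK, hdθ]
    have hqdeg : q.natDegree = 0 := by
      have := Polynomial.natDegree_mul hmne hqne
      rw [← hq, hd8, hdeg] at this
      omega
    have hql : q = Polynomial.C (q.coeff 0) := Polynomial.eq_C_of_natDegree_eq_zero hqdeg
    have hlead : q.coeff 0 = 1 := by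
      have h1 := congrArg Polynomial.leadingCoeff hq
      rw [Polynomial.leadingCoeff_mul, (minpoly.monic hint_θ).leadingCoeff, one_mul, hm8.leadingCoeff] at h1
      rw [Polynomial.leadingCoeff, hqdeg] at h1
      exact h1.symm
    rw [hq, hql, hlead, map_one, mul_one]
  refine ⟨hminpoly, hdθ, hFK, ?_⟩
  have t3 := IntermediateField.finrank_bot_mul_relfinrank hFK
  rw [hdsF, hdθ, IntermediateField.relfinrank_eq_finrank_of_le hFK] at t3
  omega
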